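/- Suppose det(T_ψ) ≠ 0. Then the kernel of H_n(ψ) equals the image of the symmetric subspace of (ℂ²)^{⊗n} under the invertible linear map T^{all}_ψ = I ⊗ T_ψ ⊗ T_ψ² ⊗ ⋯ ⊗ T_ψ^{n−1}; in particular this kernel has dimension n+1. -/

import Mathlib

open scoped BigOperators
open Matrix Polynomial

noncomputable section

/-- A two-site operator `A` applied to qubits `i` and `j` of an `n`-qubit chain,
acting as the identity on the remaining qubits. -/
def twoSite (n : ℕ) (A : Matrix (Fin 2 × Fin 2) (Fin 2 × Fin 2) ℂ) (i j : Fin n) :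
    Matrix (Fin n → Fin 2) (Fin n → Fin 2) ℂ :=
  fun x y => A (x i, x j) (y i, y j) *
    ∏ k : Fin n, if k = i ∨ k = j then 1 else (if x k = y k then 1 else 0)

/-- The rank-one projector `|ψ⟩⟨ψ|` onto a two-qubit state `ψ`. -/
def vecProj (ψ : Fin 2 × Fin 2 → ℂ) : Matrix (Fin 2 × Fin 2) (Fin 2 × Fin 2) ℂ :=
  fun a b => ψ a * star (ψ b)

/-- Open-boundary chain Hamiltonian with (possibly) site-dependent forbidden states:
`H_n(ψ₁,…,ψ_{n-1}) = Σ_j |ψ_j⟩⟨ψ_j|_{j,j+1}` (here `ψs` is 0-indexed). -/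
def HnGen (n : ℕ) (ψs : ℕ → Fin 2 × Fin 2 → ℂ) :
    Matrix (Fin n → Fin 2) (Fin n → Fin 2) ℂ :=
  ∑ i : Fin n,
    if h : (i : ℕ) + 1 < n then twoSite n (vecProj (ψs (i : ℕ))) i ⟨(i : ℕ) + 1, h⟩ else 0

/-- Translation-invariant open-boundary Hamiltonian `H_n(ψ)`. -/
def Hn (n : ℕ) (ψ : Fin 2 × Fin 2 → ℂ) : Matrix (Fin n → Fin 2) (Fin n → Fin 2) ℂ :=
  HnGen n fun _ => ψ

/-- The matrix `T_ψ`. -/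
def Tmat (ψ : Fin 2 × Fin 2 → ℂ) : Matrix (Fin 2) (Fin 2) ℂ :=
  !![star (ψ (0, 1)), star (ψ (1, 1)); -star (ψ (0, 0)), -star (ψ (1, 0))]

/-- The symmetric subspace of `(ℂ²)^{⊗n}`: vectors invariant under all permutations of the
tensor factors. -/
def SymSubspace (n : ℕ) : Submodule ℂ ((Fin n → Fin 2) → ℂ) where
  carrier := {x | ∀ σ : Equiv.Perm (Fin n), ∀ b, x (b ∘ σ) = x b}
  add_mem' := by
    intro a b ha hb σ z
    simp only [Pi.add_apply, ha σ z, hb σ z]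
  zero_mem' := by intro σ z; simp
  smul_mem' := by
    intro r a ha σ z
    simp only [Pi.smul_apply, ha σ z]

/-- The operator `T^{all}_ψ = I ⊗ T_ψ ⊗ T_ψ² ⊗ ⋯ ⊗ T_ψ^{n−1}`. -/
def Tall (n : ℕ) (ψ : Fin 2 × Fin 2 → ℂ) : Matrix (Fin n → Fin 2) (Fin n → Fin 2) ℂ :=
  fun x y => ∏ k : Fin n, (Tmat ψ ^ (k : ℕ)) (x k) (y k)

namespace GSE

variable {n : ℕ}

def kron (n : ℕ) (B : Fin n → Matrix (Fin 2) (Fin 2) ℂ) :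
    Matrix (Fin n → Fin 2) (Fin n → Fin 2) ℂ :=
  fun x y => ∏ k, B k (x k) (y k)

lemma kron_mul (B C : Fin n → Matrix (Fin 2) (Fin 2) ℂ) :
    kron n B * kron n C = kron n (fun k => B k * C k) := by
  ext x z
  simp only [kron, Matrix.mul_apply]
  rw [Fintype.prod_sum]
  exact Finset.sum_congr rfl fun y _ => (Finset.prod_mul_distrib).symm

lemma kron_one : kron n (fun _ => (1 : Matrix (Fin 2) (Fin 2) ℂ)) = 1 := by
  ext x y
  simp only [kron, Matrix.one_apply]
  rw [Finset.prod_boole]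
  simp [funext_iff]

lemma kron_bijective (B : Fin n → Matrix (Fin 2) (Fin 2) ℂ)
    (hB : ∀ k, (B k).det ≠ 0) : Function.Bijective (kron n B).mulVecLin := by
  have h1 : kron n B * kron n (fun k => (B k)⁻¹) = 1 := by
    rw [kron_mul]
    rw [show (fun k => B k * (B k)⁻¹) = fun _ : Fin n => (1 : Matrix (Fin 2) (Fin 2) ℂ) from
      funext fun k => Matrix.mul_nonsing_inv _ (isUnit_iff_ne_zero.mpr (hB k))]
    exact kron_one
  have h2 : kron n (fun k => (B k)⁻¹) * kron n B = 1 := by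
    rw [kron_mul]
    rw [show (fun k => (B k)⁻¹ * B k) = fun _ : Fin n => (1 : Matrix (Fin 2) (Fin 2) ℂ) from
      funext fun k => Matrix.nonsing_inv_mul _ (isUnit_iff_ne_zero.mpr (hB k))]
    exact kron_one
  refine Function.bijective_iff_has_inverse.mpr ⟨(kron n (fun k => (B k)⁻¹)).mulVecLin, ?_, ?_⟩
  · intro v
    simp [Matrix.mulVecLin_apply, Matrix.mulVec_mulVec, h2]
  · intro v
    simp [Matrix.mulVecLin_apply, Matrix.mulVec_mulVec, h1]

lemma kron_inj (B : Fin n → Matrix (Fin 2) (Fin 2) ℂ)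
    (hB : ∀ k, (B k).det ≠ 0) {v : (Fin n → Fin 2) → ℂ}
    (hv : (kron n B).mulVec v = 0) : v = 0 := by
  have := (kron_bijective B hB).injective
  have h0 : (kron n B).mulVecLin v = (kron n B).mulVecLin 0 := by
    simpa [Matrix.mulVecLin_apply] using hv
  exact this h0


/-- Split off coordinates `i` and `j`. -/
def splitE (i j : Fin n) (hij : i ≠ j) :
    ((Fin 2 × Fin 2) × ({k : Fin n // k ≠ i ∧ k ≠ j} → Fin 2)) ≃ (Fin n → Fin 2) where
  toFun p k := if h : k = i then p.1.1 else if h' : k = j then p.1.2 else p.2 ⟨k, h, h'⟩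
  invFun w := ((w i, w j), fun k => w k.1)
  left_inv p := by
    obtain ⟨⟨a, b⟩, g⟩ := p
    simp only [Prod.mk.injEq]
    refine ⟨⟨by simp, ?_⟩, ?_⟩
    · simp [dif_neg (Ne.symm hij)]
    · funext k
      simp [dif_neg k.2.1, dif_neg k.2.2]
  right_inv w := by
    funext k
    by_cases h : k = i
    · subst h; simp
    · by_cases h' : k = j
      · subst h'; simp [h]
      · simp [h, h']

lemma splitE_eq_update (i j : Fin n) (hij : i ≠ j) (w : Fin n → Fin 2) (a b : Fin 2) :
    splitE i j hij ((a, b), fun k => w k.1) =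
      Function.update (Function.update w i a) j b := by
  funext k
  by_cases h : k = i
  · subst h
    simp [splitE, Function.update_of_ne hij, hij]
  · by_cases h' : k = j
    · subst h'; simp [splitE, h]
    · simp [splitE, h, h', Function.update_of_ne h, Function.update_of_ne h']

lemma update_pair_eval_i (i j : Fin n) (hij : i ≠ j) (w : Fin n → Fin 2) (a b : Fin 2) :
    Function.update (Function.update w i a) j b i = a := by
  rw [Function.update_of_ne hij, Function.update_self]

lemma update_pair_eval_j (i j : Fin n) (w : Fin n → Fin 2) (a b : Fin 2) :
    Function.update (Function.update w i a) j b j = b := by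
  rw [Function.update_self]

lemma update_pair_update (i j : Fin n) (hij : i ≠ j) (w : Fin n → Fin 2) (a b a' b' : Fin 2) :
    Function.update (Function.update (Function.update (Function.update w i a') j b') i a) j b
      = Function.update (Function.update w i a) j b := by
  funext k
  by_cases h : k = j
  · subst h; simp
  · by_cases h' : k = i
    · subst h'
      simp [Function.update_of_ne hij, Function.update_of_ne h]
    · simp [Function.update_of_ne h, Function.update_of_ne h']

/-- mulVec formula for twoSite. -/
lemma twoSite_mulVec (A : Matrix (Fin 2 × Fin 2) (Fin 2 × Fin 2) ℂ) (i j : Fin n)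
    (hij : i ≠ j) (x : (Fin n → Fin 2) → ℂ) (w : Fin n → Fin 2) :
    (twoSite n A i j).mulVec x w =
      ∑ a, ∑ b, A (w i, w j) (a, b) * x (Function.update (Function.update w i a) j b) := by
  rw [Matrix.mulVec, dotProduct]
  rw [← Equiv.sum_comp (splitE i j hij)]
  rw [Fintype.sum_prod_type]
  rw [Fintype.sum_prod_type]
  refine Finset.sum_congr rfl fun a _ => Finset.sum_congr rfl fun b _ => ?_
  -- now sum over g of twoSite entry * x
  have key : ∀ g : {k : Fin n // k ≠ i ∧ k ≠ j} → Fin 2,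
      twoSite n A i j w (splitE i j hij ((a, b), g)) =
        A (w i, w j) (a, b) * (if (fun k : {k : Fin n // k ≠ i ∧ k ≠ j} => w k.1) = g then 1 else 0) := by
    intro g
    rw [twoSite]
    have e1 : splitE i j hij ((a, b), g) i = a := by simp [splitE]
    have e2 : splitE i j hij ((a, b), g) j = b := by simp [splitE, dif_neg (Ne.symm hij)]
    rw [e1, e2]
    congr 1
    have step1 : (∏ k : Fin n, if k = i ∨ k = j then (1:ℂ)
          else if w k = splitE i j hij ((a, b), g) k then 1 else 0)
        = ∏ k : Fin n, if k = i ∨ k = j ∨ w k = splitE i j hij ((a, b), g) k then (1:ℂ) else 0 := by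
      refine Finset.prod_congr rfl fun k _ => ?_
      by_cases h : k = i ∨ k = j
      · rcases h with h | h <;> simp [h]
      · push_neg at h
        simp [h.1, h.2]
    rw [step1, Finset.prod_boole]
    have hcond : (∀ k ∈ Finset.univ, k = i ∨ k = j ∨ w k = splitE i j hij ((a, b), g) k)
        ↔ (fun k : {k : Fin n // k ≠ i ∧ k ≠ j} => w k.1) = g := by
      constructor
      · intro h
        funext k
        have := h k.1 (Finset.mem_univ _)
        rcases this with h1 | h1 | h1
        · exact absurd h1 k.2.1
        · exact absurd h1 k.2.2
        · rw [h1]; simp [splitE, k.2.1, k.2.2]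
      · intro h k _
        by_cases h1 : k = i
        · exact Or.inl h1
        by_cases h2 : k = j
        · exact Or.inr (Or.inl h2)
        refine Or.inr (Or.inr ?_)
        have := congrFun h ⟨k, h1, h2⟩
        simp only at this
        simp only [splitE, Equiv.coe_fn_mk, dif_neg h1, dif_neg h2]
        exact this
    simp only [hcond]
  calc ∑ g, twoSite n A i j w (splitE i j hij ((a, b), g)) * x (splitE i j hij ((a, b), g))
      = ∑ g, (if (fun k : {k : Fin n // k ≠ i ∧ k ≠ j} => w k.1) = g
          then A (w i, w j) (a, b) * x (splitE i j hij ((a, b), g)) else 0) := by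
        refine Finset.sum_congr rfl fun g _ => ?_
        rw [key g]
        by_cases h : (fun k : {k : Fin n // k ≠ i ∧ k ≠ j} => w k.1) = g <;> simp [h] <;> ring
    _ = A (w i, w j) (a, b) * x (splitE i j hij ((a, b), fun k => w k.1)) := by
        rw [Finset.sum_ite_eq]
        simp
    _ = A (w i, w j) (a, b) * x (Function.update (Function.update w i a) j b) := by
        rw [splitE_eq_update]


def eps : Matrix (Fin 2) (Fin 2) ℂ := !![0, 1; -1, 0]

lemma psym_eq (ψ : Fin 2 × Fin 2 → ℂ) (a b : Fin 2) :
    star (ψ (a, b)) = ((Tmat ψ)ᵀ * eps) a b := by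
  fin_cases a <;> fin_cases b <;>
    simp [Tmat, eps, Matrix.mul_apply, Fin.sum_univ_two, Matrix.vecHead, Matrix.vecTail]

lemma conj_eps (M : Matrix (Fin 2) (Fin 2) ℂ) :
    Mᵀ * eps * M = M.det • eps := by
  ext a b
  fin_cases a <;> fin_cases b <;>
    simp [eps, Matrix.mul_apply, Fin.sum_univ_two, Matrix.det_fin_two] <;> ring

/-- The key contraction identity. -/
lemma key_contraction (ψ : Fin 2 × Fin 2 → ℂ) (m : ℕ) (v w : Fin 2) :
    ∑ a, ∑ b, star (ψ (a, b)) * (Tmat ψ ^ m) a v * (Tmat ψ ^ (m+1)) b w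
      = (Tmat ψ).det ^ (m+1) * eps v w := by
  have lhs_eq : ∑ a, ∑ b, star (ψ (a, b)) * (Tmat ψ ^ m) a v * (Tmat ψ ^ (m+1)) b w
      = ((Tmat ψ ^ m)ᵀ * ((Tmat ψ)ᵀ * eps) * (Tmat ψ ^ (m+1))) v w := by
    simp only [Matrix.mul_apply, Matrix.transpose_apply, Finset.sum_mul, Finset.mul_sum]
    rw [Finset.sum_comm]
    refine Finset.sum_congr rfl fun a _ => Finset.sum_congr rfl fun b _ => ?_
    rw [psym_eq]
    simp only [Matrix.mul_apply, Matrix.transpose_apply, Finset.sum_mul]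
    exact Finset.sum_congr rfl fun c _ => by ring
  rw [lhs_eq]
  have : (Tmat ψ ^ m)ᵀ * ((Tmat ψ)ᵀ * eps) * (Tmat ψ ^ (m+1))
      = (Tmat ψ ^ (m+1))ᵀ * eps * (Tmat ψ ^ (m+1)) := by
    rw [show (Tmat ψ ^ (m+1))ᵀ = (Tmat ψ ^ m)ᵀ * (Tmat ψ)ᵀ from by
      rw [← Matrix.transpose_mul, ← pow_succ']]
    simp only [Matrix.mul_assoc]
  rw [this, conj_eps, Matrix.det_pow]
  simp [Matrix.smul_apply, smul_eq_mul]

lemma exists_ne_zero (ψ : Fin 2 × Fin 2 → ℂ)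
    (hψ : ∑ a, Complex.normSq (ψ a) = 1) : ∃ a, ψ a ≠ 0 := by
  by_contra h
  push_neg at h
  simp [h] at hψ


lemma splitE_fst (i j : Fin n) (hij : i ≠ j) (a b : Fin 2)
    (g : {k : Fin n // k ≠ i ∧ k ≠ j} → Fin 2) : splitE i j hij ((a, b), g) i = a := by
  simp [splitE]

lemma splitE_snd (i j : Fin n) (hij : i ≠ j) (a b : Fin 2)
    (g : {k : Fin n // k ≠ i ∧ k ≠ j} → Fin 2) : splitE i j hij ((a, b), g) j = b := by
  simp [splitE, dif_neg (Ne.symm hij)]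

lemma splitE_restrict (i j : Fin n) (hij : i ≠ j) (a b : Fin 2)
    (g : {k : Fin n // k ≠ i ∧ k ≠ j} → Fin 2) :
    (fun k : {k : Fin n // k ≠ i ∧ k ≠ j} => splitE i j hij ((a, b), g) k.1) = g := by
  funext k
  simp [splitE, dif_neg k.2.1, dif_neg k.2.2]

lemma splitE_pair (i j : Fin n) (hij : i ≠ j) (a b c d : Fin 2)
    (g : {k : Fin n // k ≠ i ∧ k ≠ j} → Fin 2) :
    splitE i j hij ((a, b), g) =
      Function.update (Function.update (splitE i j hij ((c, d), g)) i a) j b := by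
  rw [← splitE_eq_update i j hij (splitE i j hij ((c, d), g)) a b, splitE_restrict]

def Scontr (ψ : Fin 2 × Fin 2 → ℂ) {n : ℕ} (i j : Fin n) (x : (Fin n → Fin 2) → ℂ)
    (w : Fin n → Fin 2) : ℂ :=
  ∑ a, ∑ b, star (ψ (a, b)) * x (Function.update (Function.update w i a) j b)

lemma Scontr_update (ψ : Fin 2 × Fin 2 → ℂ) (i j : Fin n) (hij : i ≠ j)
    (x : (Fin n → Fin 2) → ℂ) (w : Fin n → Fin 2) (a b : Fin 2) :
    Scontr ψ i j x (Function.update (Function.update w i a) j b) = Scontr ψ i j x w := by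
  unfold Scontr
  refine Finset.sum_congr rfl fun a' _ => Finset.sum_congr rfl fun b' _ => ?_
  rw [update_pair_update i j hij]

lemma Scontr_splitE (ψ : Fin 2 × Fin 2 → ℂ) (i j : Fin n) (hij : i ≠ j)
    (x : (Fin n → Fin 2) → ℂ) (a b : Fin 2) (g : {k : Fin n // k ≠ i ∧ k ≠ j} → Fin 2) :
    Scontr ψ i j x (splitE i j hij ((a, b), g))
      = Scontr ψ i j x (splitE i j hij ((0, 0), g)) := by
  rw [splitE_pair i j hij a b 0 0 g, Scontr_update ψ i j hij]

lemma proj_mulVec (ψ : Fin 2 × Fin 2 → ℂ) (i j : Fin n) (hij : i ≠ j)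
    (x : (Fin n → Fin 2) → ℂ) (w : Fin n → Fin 2) :
    (twoSite n (vecProj ψ) i j).mulVec x w = ψ (w i, w j) * Scontr ψ i j x w := by
  rw [twoSite_mulVec _ i j hij, Scontr, Finset.mul_sum]
  refine Finset.sum_congr rfl fun a _ => ?_
  rw [Finset.mul_sum]
  refine Finset.sum_congr rfl fun b _ => ?_
  rw [vecProj]
  ring

lemma qf_eq (ψ : Fin 2 × Fin 2 → ℂ) (i j : Fin n) (hij : i ≠ j)
    (x : (Fin n → Fin 2) → ℂ) :
    ∑ w, star (x w) * ((twoSite n (vecProj ψ) i j).mulVec x w)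
      = ∑ g : {k : Fin n // k ≠ i ∧ k ≠ j} → Fin 2,
          (Complex.normSq (Scontr ψ i j x (splitE i j hij ((0, 0), g))) : ℂ) := by
  rw [← Equiv.sum_comp (splitE i j hij)]
  rw [Fintype.sum_prod_type, Finset.sum_comm]
  refine Finset.sum_congr rfl fun g _ => ?_
  have hrw : ∀ p : Fin 2 × Fin 2,
      star (x (splitE i j hij (p, g))) * ((twoSite n (vecProj ψ) i j).mulVec x (splitE i j hij (p, g)))
        = Scontr ψ i j x (splitE i j hij ((0,0), g)) *
            (ψ p * star (x (splitE i j hij (p, g)))) := by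
    rintro ⟨a, b⟩
    rw [proj_mulVec ψ i j hij, splitE_fst i j hij, splitE_snd i j hij,
      Scontr_splitE ψ i j hij]
    ring
  rw [Finset.sum_congr rfl fun p _ => hrw p, ← Finset.mul_sum]
  have hsum : ∑ p : Fin 2 × Fin 2, ψ p * star (x (splitE i j hij (p, g)))
      = star (Scontr ψ i j x (splitE i j hij ((0, 0), g))) := by
    rw [Scontr]
    rw [Fintype.sum_prod_type]
    rw [star_sum]
    refine Finset.sum_congr rfl fun a _ => ?_
    rw [star_sum]
    refine Finset.sum_congr rfl fun b _ => ?_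
    rw [← splitE_pair i j hij a b 0 0 g]
    rw [star_mul', star_star]
  rw [hsum]
  rw [show star (Scontr ψ i j x (splitE i j hij ((0, 0), g)))
    = (starRingEnd ℂ) (Scontr ψ i j x (splitE i j hij ((0, 0), g))) from rfl]
  rw [Complex.mul_conj]

lemma sum_mulVec' {ι : Type*} [Fintype ι] {m : Type*} [Fintype m] [DecidableEq m]
    (A : ι → Matrix m m ℂ) (x : m → ℂ) (w : m) :
    ((∑ i, A i) *ᵥ x) w = ∑ i, (A i *ᵥ x) w := by
  simp only [Matrix.mulVec, dotProduct, Matrix.sum_apply, Finset.sum_mul]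
  exact Finset.sum_comm

lemma hn_mulVec (ψ : Fin 2 × Fin 2 → ℂ) (x : (Fin n → Fin 2) → ℂ) (w : Fin n → Fin 2) :
    (Hn n ψ).mulVec x w = ∑ i : Fin n,
      (if h : (i : ℕ) + 1 < n
        then (twoSite n (vecProj ψ) i ⟨(i : ℕ) + 1, h⟩).mulVec x w else 0) := by
  rw [Hn, HnGen,
    sum_mulVec' (fun i : Fin n => if h : (i : ℕ) + 1 < n
      then twoSite n (vecProj ψ) i ⟨(i : ℕ) + 1, h⟩ else 0) x w]
  refine Finset.sum_congr rfl fun i _ => ?_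
  split_ifs with h
  · rfl
  · simp

lemma adj_ne (i : Fin n) (h : (i : ℕ) + 1 < n) : i ≠ (⟨(i : ℕ) + 1, h⟩ : Fin n) := by
  intro hc
  have := congrArg Fin.val hc
  simp at this

lemma ker_iff (ψ : Fin 2 × Fin 2 → ℂ) (x : (Fin n → Fin 2) → ℂ) :
    (Hn n ψ).mulVec x = 0 ↔
      ∀ (i : Fin n) (h : (i : ℕ) + 1 < n) (w : Fin n → Fin 2),
        Scontr ψ i ⟨(i : ℕ) + 1, h⟩ x w = 0 := by
  constructor
  · intro hx i h w
    set j : Fin n := ⟨(i : ℕ) + 1, h⟩ with hj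
    have hij := adj_ne i h
    -- quadratic form is zero
    have hq : (0 : ℂ) = ∑ i' : Fin n, (if h' : (i' : ℕ) + 1 < n then
        ∑ g : {k : Fin n // k ≠ i' ∧ k ≠ (⟨(i' : ℕ) + 1, h'⟩ : Fin n)} → Fin 2,
          (Complex.normSq (Scontr ψ i' ⟨(i' : ℕ) + 1, h'⟩ x
            (splitE i' ⟨(i' : ℕ) + 1, h'⟩ (adj_ne i' h') ((0, 0), g))) : ℂ) else 0) := by
      have h0 : ∑ w, star (x w) * ((Hn n ψ).mulVec x w) = 0 := by
        simp [hx]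
      have expand : ∑ w, star (x w) * ((Hn n ψ).mulVec x w)
          = ∑ i' : Fin n, (if h' : (i' : ℕ) + 1 < n then
              ∑ g : {k : Fin n // k ≠ i' ∧ k ≠ (⟨(i' : ℕ) + 1, h'⟩ : Fin n)} → Fin 2,
                (Complex.normSq (Scontr ψ i' ⟨(i' : ℕ) + 1, h'⟩ x
                  (splitE i' ⟨(i' : ℕ) + 1, h'⟩ (adj_ne i' h') ((0, 0), g))) : ℂ) else 0) := by
        calc ∑ w, star (x w) * ((Hn n ψ).mulVec x w)
            = ∑ w, ∑ i' : Fin n, star (x w) * (if h' : (i' : ℕ) + 1 < n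
                then (twoSite n (vecProj ψ) i' ⟨(i' : ℕ) + 1, h'⟩).mulVec x w else 0) := by
              refine Finset.sum_congr rfl fun w _ => ?_
              rw [hn_mulVec ψ x w, Finset.mul_sum]
          _ = ∑ i' : Fin n, ∑ w, star (x w) * (if h' : (i' : ℕ) + 1 < n
                then (twoSite n (vecProj ψ) i' ⟨(i' : ℕ) + 1, h'⟩).mulVec x w else 0) :=
              Finset.sum_comm
          _ = _ := by
              refine Finset.sum_congr rfl fun i' _ => ?_
              by_cases h' : (i' : ℕ) + 1 < n
              · simp only [dif_pos h']
                exact qf_eq ψ i' _ (adj_ne i' h') x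
              · simp only [dif_neg h', mul_zero, Finset.sum_const_zero]
      rw [← expand]
      exact h0.symm
    -- real part argument
    have hr : ∀ (i' : Fin n) (h' : (i' : ℕ) + 1 < n)
        (g : {k : Fin n // k ≠ i' ∧ k ≠ (⟨(i' : ℕ) + 1, h'⟩ : Fin n)} → Fin 2),
        Scontr ψ i' ⟨(i' : ℕ) + 1, h'⟩ x
          (splitE i' ⟨(i' : ℕ) + 1, h'⟩ (adj_ne i' h') ((0, 0), g)) = 0 := by
      have hre := congrArg Complex.re hq
      rw [Complex.zero_re, Complex.re_sum] at hre
      have hterm : ∀ (i' : Fin n), i' ∈ Finset.univ → (0:ℝ) ≤ (if h' : (i' : ℕ) + 1 < n then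
          ∑ g : {k : Fin n // k ≠ i' ∧ k ≠ (⟨(i' : ℕ) + 1, h'⟩ : Fin n)} → Fin 2,
            (Complex.normSq (Scontr ψ i' ⟨(i' : ℕ) + 1, h'⟩ x
              (splitE i' ⟨(i' : ℕ) + 1, h'⟩ (adj_ne i' h') ((0, 0), g))) : ℂ) else 0).re := by
        intro i' _
        split_ifs with h'
        · rw [Complex.re_sum]
          refine Finset.sum_nonneg fun g _ => ?_
          rw [Complex.ofReal_re]
          exact Complex.normSq_nonneg _
        · simp
      have hall := (Finset.sum_eq_zero_iff_of_nonneg hterm).mp hre.symm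
      intro i' h' g
      have := hall i' (Finset.mem_univ _)
      rw [dif_pos h', Complex.re_sum] at this
      have hg := (Finset.sum_eq_zero_iff_of_nonneg (fun g _ => by
        rw [Complex.ofReal_re]; exact Complex.normSq_nonneg _)).mp this g (Finset.mem_univ _)
      rw [Complex.ofReal_re] at hg
      exact Complex.normSq_eq_zero.mp hg
    -- conclude for arbitrary w
    have hw : w = splitE i j hij ((w i, w j), fun k => w k.1) := by
      exact ((splitE i j hij).apply_symm_apply w).symm
    rw [hw, Scontr_splitE ψ i j hij]
    exact hr i h _
  · intro hS
    funext w
    rw [hn_mulVec ψ x w]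
    refine Finset.sum_eq_zero fun i _ => ?_
    split_ifs with h
    · rw [proj_mulVec ψ i _ (adj_ne i h), hS i h w, mul_zero]
    · rfl


lemma prod_split (i j : Fin n) (hij : i ≠ j) (F : Fin n → ℂ) :
    ∏ k, F k = F i * F j * ∏ k : {k : Fin n // k ≠ i ∧ k ≠ j}, F k.1 := by
  rw [← Finset.mul_prod_erase Finset.univ F (Finset.mem_univ i)]
  rw [← Finset.mul_prod_erase (Finset.univ.erase i) F
    (Finset.mem_erase.mpr ⟨Ne.symm hij, Finset.mem_univ j⟩)]
  rw [mul_assoc]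
  congr 1
  congr 1
  rw [← Finset.prod_subtype ((Finset.univ.erase i).erase j)
    (fun k => by simp [and_comm, Finset.mem_erase]) (fun k => F k)]

def Feps {n : ℕ} (i j : Fin n) (y : (Fin n → Fin 2) → ℂ) (v : Fin n → Fin 2) : ℂ :=
  ∑ c, ∑ d, eps c d * y (Function.update (Function.update v i c) j d)

lemma Feps_update (i j : Fin n) (hij : i ≠ j) (y : (Fin n → Fin 2) → ℂ)
    (v : Fin n → Fin 2) (c d : Fin 2) :
    Feps i j y (Function.update (Function.update v i c) j d) = Feps i j y v := by
  unfold Feps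
  refine Finset.sum_congr rfl fun c' _ => Finset.sum_congr rfl fun d' _ => ?_
  rw [update_pair_update i j hij]

def Bmod (ψ : Fin 2 × Fin 2 → ℂ) {n : ℕ} (i j : Fin n) : Fin n → Matrix (Fin 2) (Fin 2) ℂ :=
  fun k => if k = i ∨ k = j then 1 else Tmat ψ ^ (k : ℕ)

lemma Scontr_Tall (ψ : Fin 2 × Fin 2 → ℂ) (i : Fin n) (h : (i : ℕ) + 1 < n)
    (y : (Fin n → Fin 2) → ℂ) (w : Fin n → Fin 2) :
    Scontr ψ i ⟨(i : ℕ) + 1, h⟩ ((Tall n ψ).mulVec y) w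
      = (Tmat ψ).det ^ ((i : ℕ) + 1) *
        (kron n (Bmod ψ i ⟨(i : ℕ) + 1, h⟩)).mulVec
          (Feps i ⟨(i : ℕ) + 1, h⟩ y) w := by
  set j : Fin n := ⟨(i : ℕ) + 1, h⟩ with hjdef
  have hij : i ≠ j := adj_ne i h
  set Common : ℂ := ∑ g : {k : Fin n // k ≠ i ∧ k ≠ j} → Fin 2,
      (∏ k : {k : Fin n // k ≠ i ∧ k ≠ j}, (Tmat ψ ^ (k.1 : ℕ)) (w k.1) (g k)) *
        Feps i j y (splitE i j hij ((0, 0), g)) with hC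
  have hL : Scontr ψ i j ((Tall n ψ).mulVec y) w = (Tmat ψ).det ^ ((i : ℕ) + 1) * Common := by
    have entry : ∀ (a b : Fin 2) (v : Fin n → Fin 2),
        Tall n ψ (Function.update (Function.update w i a) j b) v
          = (Tmat ψ ^ (i : ℕ)) a (v i) * (Tmat ψ ^ ((i : ℕ) + 1)) b (v j) *
              ∏ k : {k : Fin n // k ≠ i ∧ k ≠ j}, (Tmat ψ ^ (k.1 : ℕ)) (w k.1) (v k.1) := by
      intro a b v
      rw [show Tall n ψ (Function.update (Function.update w i a) j b) v
          = ∏ k : Fin n, (Tmat ψ ^ (k : ℕ))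
              (Function.update (Function.update w i a) j b k) (v k) from rfl]
      rw [prod_split i j hij]
      rw [update_pair_eval_i i j hij, update_pair_eval_j]
      congr 1
      refine Finset.prod_congr rfl fun k _ => ?_
      rw [Function.update_of_ne k.2.2, Function.update_of_ne k.2.1]
    have step1 : Scontr ψ i j ((Tall n ψ).mulVec y) w
        = ∑ v : Fin n → Fin 2, (Tmat ψ).det ^ ((i : ℕ) + 1) * eps (v i) (v j) *
            ((∏ k : {k : Fin n // k ≠ i ∧ k ≠ j}, (Tmat ψ ^ (k.1 : ℕ)) (w k.1) (v k.1)) * y v) := by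
      unfold Scontr
      simp only [Matrix.mulVec, dotProduct]
      have e1 : ∀ a b : Fin 2,
          star (ψ (a, b)) * ∑ v, Tall n ψ (Function.update (Function.update w i a) j b) v * y v
            = ∑ v, star (ψ (a, b)) * (Tmat ψ ^ (i : ℕ)) a (v i) *
                (Tmat ψ ^ ((i : ℕ) + 1)) b (v j) *
                ((∏ k : {k : Fin n // k ≠ i ∧ k ≠ j}, (Tmat ψ ^ (k.1 : ℕ)) (w k.1) (v k.1)) * y v) := by
        intro a b
        rw [Finset.mul_sum]
        refine Finset.sum_congr rfl fun v _ => ?_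
        rw [entry a b v]
        ring
      rw [Finset.sum_congr rfl fun a _ => Finset.sum_congr rfl fun b _ => e1 a b]
      rw [Finset.sum_congr rfl fun a (_ : a ∈ Finset.univ) => Finset.sum_comm]
      rw [Finset.sum_comm]
      refine Finset.sum_congr rfl fun v _ => ?_
      rw [show ∑ a, ∑ b, star (ψ (a, b)) * (Tmat ψ ^ (i : ℕ)) a (v i) *
            (Tmat ψ ^ ((i : ℕ) + 1)) b (v j) *
            ((∏ k : {k : Fin n // k ≠ i ∧ k ≠ j}, (Tmat ψ ^ (k.1 : ℕ)) (w k.1) (v k.1)) * y v)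
          = (∑ a, ∑ b, star (ψ (a, b)) * (Tmat ψ ^ (i : ℕ)) a (v i) *
              (Tmat ψ ^ ((i : ℕ) + 1)) b (v j)) *
            ((∏ k : {k : Fin n // k ≠ i ∧ k ≠ j}, (Tmat ψ ^ (k.1 : ℕ)) (w k.1) (v k.1)) * y v) from by
        rw [Finset.sum_mul]
        exact Finset.sum_congr rfl fun a _ => by rw [Finset.sum_mul]]
      rw [key_contraction ψ (i : ℕ) (v i) (v j)]
    rw [step1]
    have grp : ∀ v : Fin n → Fin 2, (Tmat ψ).det ^ ((i : ℕ) + 1) * eps (v i) (v j) *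
          ((∏ k : {k : Fin n // k ≠ i ∧ k ≠ j}, (Tmat ψ ^ (k.1 : ℕ)) (w k.1) (v k.1)) * y v)
        = (Tmat ψ).det ^ ((i : ℕ) + 1) * (eps (v i) (v j) *
          ((∏ k : {k : Fin n // k ≠ i ∧ k ≠ j}, (Tmat ψ ^ (k.1 : ℕ)) (w k.1) (v k.1)) * y v)) := by
      intro v; ring
    rw [Finset.sum_congr rfl fun v _ => grp v, ← Finset.mul_sum]
    congr 1
    -- split the v-sum
    rw [← Equiv.sum_comp (splitE i j hij)]
    rw [Fintype.sum_prod_type, Finset.sum_comm, hC]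
    refine Finset.sum_congr rfl fun g _ => ?_
    rw [Fintype.sum_prod_type]
    have ev : ∀ c d : Fin 2,
        eps (splitE i j hij ((c, d), g) i) (splitE i j hij ((c, d), g) j) *
          ((∏ k : {k : Fin n // k ≠ i ∧ k ≠ j},
              (Tmat ψ ^ (k.1 : ℕ)) (w k.1) (splitE i j hij ((c, d), g) k.1)) *
            y (splitE i j hij ((c, d), g)))
        = (∏ k : {k : Fin n // k ≠ i ∧ k ≠ j}, (Tmat ψ ^ (k.1 : ℕ)) (w k.1) (g k)) *
            (eps c d * y (Function.update (Function.update (splitE i j hij ((0, 0), g)) i c) j d)) := by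
      intro c d
      rw [splitE_fst i j hij, splitE_snd i j hij, ← splitE_pair i j hij c d 0 0 g]
      rw [show (fun k : {k : Fin n // k ≠ i ∧ k ≠ j} =>
          (Tmat ψ ^ (k.1 : ℕ)) (w k.1) (splitE i j hij ((c, d), g) k.1)) = fun k =>
          (Tmat ψ ^ (k.1 : ℕ)) (w k.1) (g k) from funext fun k => by
        rw [congrFun (splitE_restrict i j hij c d g) k]]
      ring
    rw [Finset.sum_congr rfl fun c _ => Finset.sum_congr rfl fun d _ => ev c d]
    rw [Finset.sum_congr rfl fun c (_ : c ∈ Finset.univ) => (Finset.mul_sum _ _ _).symm,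
      ← Finset.mul_sum]
    rfl
  have hR : (kron n (Bmod ψ i j)).mulVec (Feps i j y) w = Common := by
    simp only [Matrix.mulVec, dotProduct]
    rw [← Equiv.sum_comp (splitE i j hij)]
    rw [Fintype.sum_prod_type, Finset.sum_comm, hC]
    refine Finset.sum_congr rfl fun g _ => ?_
    rw [Fintype.sum_prod_type]
    have ev : ∀ c d : Fin 2,
        kron n (Bmod ψ i j) w (splitE i j hij ((c, d), g)) * Feps i j y (splitE i j hij ((c, d), g))
          = (if w i = c then (1:ℂ) else 0) * (if w j = d then (1:ℂ) else 0) *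
            ((∏ k : {k : Fin n // k ≠ i ∧ k ≠ j}, (Tmat ψ ^ (k.1 : ℕ)) (w k.1) (g k)) *
              Feps i j y (splitE i j hij ((0, 0), g))) := by
      intro c d
      rw [show kron n (Bmod ψ i j) w (splitE i j hij ((c, d), g))
          = ∏ k : Fin n, Bmod ψ i j k (w k) (splitE i j hij ((c, d), g) k) from rfl]
      rw [prod_split i j hij]
      rw [splitE_fst i j hij, splitE_snd i j hij]
      rw [show Bmod ψ i j i = 1 from if_pos (Or.inl rfl),
        show Bmod ψ i j j = 1 from if_pos (Or.inr rfl)]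
      rw [show splitE i j hij ((c, d), g)
          = Function.update (Function.update (splitE i j hij ((0, 0), g)) i c) j d from
          splitE_pair i j hij c d 0 0 g, Feps_update i j hij]
      rw [show (∏ k : {k : Fin n // k ≠ i ∧ k ≠ j},
          Bmod ψ i j k.1 (w k.1)
            (Function.update (Function.update (splitE i j hij ((0, 0), g)) i c) j d k.1))
          = ∏ k : {k : Fin n // k ≠ i ∧ k ≠ j}, (Tmat ψ ^ (k.1 : ℕ)) (w k.1) (g k) from
        Finset.prod_congr rfl fun k _ => by
          rw [show Bmod ψ i j k.1 = Tmat ψ ^ (k.1 : ℕ) from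
            if_neg (by push_neg; exact k.2)]
          rw [Function.update_of_ne k.2.2, Function.update_of_ne k.2.1]
          rw [congrFun (splitE_restrict i j hij 0 0 g) k]]
      rw [Matrix.one_apply, Matrix.one_apply]
      ring
    rw [Finset.sum_congr rfl fun c _ => Finset.sum_congr rfl fun d _ => ev c d]
    have collapse : ∀ K : ℂ, (∑ c : Fin 2, ∑ d : Fin 2, (if w i = c then (1:ℂ) else 0) *
        (if w j = d then (1:ℂ) else 0) * K) = K := by
      intro K
      simp [ite_mul, zero_mul, one_mul, Finset.sum_ite_eq]
    exact collapse _
  rw [hL, hR]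

lemma update_pair_self (i j : Fin n) (hij : i ≠ j) (v : Fin n → Fin 2) (a b : Fin 2)
    (ha : v i = a) (hb : v j = b) :
    Function.update (Function.update v i a) j b = v := by
  subst ha; subst hb
  rw [Function.update_eq_self, Function.update_eq_self]

lemma comp_swap (i j : Fin n) (hij : i ≠ j) (v : Fin n → Fin 2) :
    v ∘ Equiv.swap i j = Function.update (Function.update v i (v j)) j (v i) := by
  funext k
  by_cases hk : k = i
  · subst hk
    simp only [Function.comp_apply, Equiv.swap_apply_left]
    rw [Function.update_of_ne hij, Function.update_self]
  · by_cases hk' : k = j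
    · subst hk'
      simp only [Function.comp_apply, Equiv.swap_apply_right, Function.update_self]
    · simp only [Function.comp_apply, Equiv.swap_apply_of_ne_of_ne hk hk']
      rw [Function.update_of_ne hk', Function.update_of_ne hk]

lemma feps_expand (i j : Fin n) (y : (Fin n → Fin 2) → ℂ) (v : Fin n → Fin 2) :
    Feps i j y v = y (Function.update (Function.update v i 0) j 1)
      - y (Function.update (Function.update v i 1) j 0) := by
  unfold Feps
  rw [Fin.sum_univ_two, Fin.sum_univ_two, Fin.sum_univ_two]
  have e00 : eps 0 0 = 0 := rfl
  have e01 : eps 0 1 = 1 := rfl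
  have e10 : eps 1 0 = -1 := rfl
  have e11 : eps 1 1 = 0 := rfl
  rw [e00, e01, e10, e11]
  ring

lemma feps_zero_iff (i j : Fin n) (hij : i ≠ j) (y : (Fin n → Fin 2) → ℂ) :
    (∀ v, Feps i j y v = 0) ↔ ∀ v, y (v ∘ Equiv.swap i j) = y v := by
  constructor
  · intro hF v
    have hv := sub_eq_zero.mp ((feps_expand i j y v).symm.trans (hF v))
    rw [comp_swap i j hij]
    have h2 : ∀ t : Fin 2, t = 0 ∨ t = 1 := by decide
    rcases h2 (v i) with hvi | hvi <;> rcases h2 (v j) with hvj | hvj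
    · rw [hvi, hvj, ← hvi, update_pair_self i j hij v _ _ rfl (hvj.trans hvi.symm)]
    · rw [hvi, hvj]
      rw [show y v = y (Function.update (Function.update v i 0) j 1) from by
        rw [update_pair_self i j hij v 0 1 hvi hvj]]
      rw [hv]
    · rw [hvi, hvj]
      rw [show y v = y (Function.update (Function.update v i 1) j 0) from by
        rw [update_pair_self i j hij v 1 0 hvi hvj]]
      exact hv
    · rw [hvi, hvj, ← hvi, update_pair_self i j hij v _ _ rfl (hvj.trans hvi.symm)]
  · intro hs v
    rw [feps_expand i j y v]
    have hback : Function.update (Function.update v i 1) j 0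
        = (Function.update (Function.update v i 0) j 1) ∘ Equiv.swap i j := by
      rw [comp_swap i j hij]
      rw [update_pair_eval_i i j hij, update_pair_eval_j]
      rw [update_pair_update i j hij]
    rw [hback, hs]
    ring

lemma mem_sym_iff_adjacent (y : (Fin n → Fin 2) → ℂ) :
    y ∈ SymSubspace n ↔ ∀ (i : Fin n) (h : (i : ℕ) + 1 < n) (b : Fin n → Fin 2),
      y (b ∘ Equiv.swap i ⟨(i : ℕ) + 1, h⟩) = y b := by
  constructor
  · intro hy i h b
    exact hy (Equiv.swap i ⟨(i : ℕ) + 1, h⟩) b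
  · intro hadj
    cases n with
    | zero =>
        intro σ b
        have : b ∘ σ = b := funext fun k => k.elim0
        rw [this]
    | succ m =>
        intro σ b
        have hσ : σ ∈ Submonoid.closure
            (Set.range fun i : Fin m => Equiv.swap (Fin.castSucc i) (Fin.succ i)) := by
          rw [Equiv.Perm.mclosure_swap_castSucc_succ]
          trivial
        refine Submonoid.closure_induction
          (motive := fun (τ : Equiv.Perm (Fin (m+1))) _ => ∀ c : Fin (m+1) → Fin 2, y (c ∘ τ) = y c) ?_ ?_ ?_ hσ b
        · rintro τ ⟨i, rfl⟩ c
          have hlt : ((Fin.castSucc i : Fin (m+1)) : ℕ) + 1 < m + 1 := by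
            simp only [Fin.coe_castSucc]
            omega
          have heq : (⟨((Fin.castSucc i : Fin (m+1)) : ℕ) + 1, hlt⟩ : Fin (m+1)) = Fin.succ i := by
            apply Fin.ext
            simp
          have := hadj (Fin.castSucc i) hlt c
          rwa [heq] at this
        · intro c
          rw [show c ∘ (1 : Equiv.Perm (Fin (m+1))) = c from rfl]
        · intro τ τ' _ _ hτ hτ' c
          rw [show c ∘ (τ * τ') = (c ∘ τ) ∘ τ' from rfl, hτ' (c ∘ τ), hτ c]

/-! ### Dimension of the symmetric subspace -/

def cnt {n : ℕ} (b : Fin n → Fin 2) : ℕ := Fintype.card {k // b k = 1}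

lemma cnt_le (b : Fin n → Fin 2) : cnt b ≤ n := by
  have := Fintype.card_subtype_le (fun k : Fin n => b k = 1)
  simpa [cnt] using this

lemma cnt_comp (b : Fin n → Fin 2) (σ : Equiv.Perm (Fin n)) : cnt (b ∘ σ) = cnt b :=
  Fintype.card_congr (Equiv.subtypeEquiv σ fun _ => Iff.rfl)

lemma exists_perm (b c : Fin n → Fin 2) (h : cnt b = cnt c) :
    ∃ σ : Equiv.Perm (Fin n), c ∘ σ = b := by
  have h0 : Fintype.card {k // ¬ (b k = 1)} = Fintype.card {k // ¬ (c k = 1)} := by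
    rw [Fintype.card_subtype_compl, Fintype.card_subtype_compl]
    unfold cnt at h
    rw [h]
  let e1 : {k // b k = 1} ≃ {k // c k = 1} := Fintype.equivOfCardEq h
  let e0 : {k // ¬ (b k = 1)} ≃ {k // ¬ (c k = 1)} := Fintype.equivOfCardEq h0
  refine ⟨(Equiv.sumCompl (fun k => b k = 1)).symm.trans
    ((e1.sumCongr e0).trans (Equiv.sumCompl (fun k => c k = 1))), ?_⟩
  funext k
  simp only [Function.comp_apply, Equiv.trans_apply]
  by_cases hk : b k = 1
  · rw [Equiv.sumCompl_symm_apply_of_pos (p := fun k => b k = 1) (a := k) hk]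
    simp only [Equiv.sumCongr_apply, Sum.map_inl, Equiv.sumCompl_apply_inl]
    rw [(e1 ⟨k, hk⟩).2, hk]
  · rw [Equiv.sumCompl_symm_apply_of_neg (p := fun k => b k = 1) (a := k) hk]
    simp only [Equiv.sumCongr_apply, Sum.map_inr, Equiv.sumCompl_apply_inr]
    have h2 : ∀ t : Fin 2, ¬ t = 1 → t = 0 := by decide
    rw [h2 _ (e0 ⟨k, hk⟩).2, h2 _ hk]

def repF (n : ℕ) (m : ℕ) : Fin n → Fin 2 := fun k => if (k : ℕ) < m then 1 else 0

lemma cnt_repF (m : ℕ) (hm : m ≤ n) : cnt (repF n m) = m := by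
  unfold cnt repF
  refine (Fintype.card_congr ?_).trans (Fintype.card_fin m)
  refine ⟨fun k => ⟨(k.1 : ℕ), ?_⟩, fun j => ⟨⟨j.1, lt_of_lt_of_le j.2 hm⟩, by
    simp [j.2]⟩, ?_, ?_⟩
  · rcases k with ⟨k, hk⟩
    by_cases h : (k : ℕ) < m
    · exact h
    · rw [if_neg h] at hk
      exact absurd hk (by decide)
  · intro k
    apply Subtype.ext
    apply Fin.ext
    rfl
  · intro j
    apply Fin.ext
    rfl

def symToFun (n : ℕ) : SymSubspace n →ₗ[ℂ] (Fin (n + 1) → ℂ) where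
  toFun x := fun m => x.1 (repF n (m : ℕ))
  map_add' x y := rfl
  map_smul' c x := rfl

lemma symToFun_bij (n : ℕ) : Function.Bijective (symToFun n) := by
  constructor
  · intro x y hxy
    apply Subtype.ext
    funext b
    have hb : cnt b = cnt (repF n (cnt b)) := (cnt_repF (cnt b) (cnt_le b)).symm
    obtain ⟨σ, hσ⟩ := exists_perm b (repF n (cnt b)) hb
    have hx : x.1 b = x.1 (repF n (cnt b)) := by
      conv_lhs => rw [← hσ]
      exact x.2 σ (repF n (cnt b))
    have hy : y.1 b = y.1 (repF n (cnt b)) := by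
      conv_lhs => rw [← hσ]
      exact y.2 σ (repF n (cnt b))
    have := congrFun hxy (⟨cnt b, Nat.lt_succ_of_le (cnt_le b)⟩ : Fin (n + 1))
    rw [hx, hy]
    exact this
  · intro c
    refine ⟨⟨fun b => c ⟨cnt b, Nat.lt_succ_of_le (cnt_le b)⟩, fun σ b => ?_⟩, ?_⟩
    · exact congrArg c (Fin.ext (cnt_comp b σ))
    · funext m
      have : (⟨cnt (repF n (m : ℕ)), Nat.lt_succ_of_le (cnt_le _)⟩ : Fin (n + 1)) = m :=
        Fin.ext ((cnt_repF (m : ℕ) (Nat.lt_succ_iff.mp m.2)).trans rfl)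
      exact congrArg c this

lemma finrank_sym (n : ℕ) : Module.finrank ℂ (SymSubspace n) = n + 1 := by
  rw [LinearEquiv.finrank_eq (LinearEquiv.ofBijective (symToFun n) (symToFun_bij n))]
  simp

/-! ### Main kernel characterization -/

lemma tall_ker_iff (ψ : Fin 2 × Fin 2 → ℂ) (hdet : (Tmat ψ).det ≠ 0)
    (y : (Fin n → Fin 2) → ℂ) :
    (Hn n ψ).mulVec ((Tall n ψ).mulVec y) = 0 ↔ y ∈ SymSubspace n := by
  rw [ker_iff ψ, mem_sym_iff_adjacent]
  have hBdet : ∀ (i : Fin n) (h : (i : ℕ) + 1 < n) (k : Fin n),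
      (Bmod ψ i ⟨(i : ℕ) + 1, h⟩ k).det ≠ 0 := by
    intro i h k
    unfold Bmod
    split_ifs
    · simp
    · rw [Matrix.det_pow]
      exact pow_ne_zero _ hdet
  constructor
  · intro hS i h b
    have hfeps : ∀ v, Feps i ⟨(i : ℕ) + 1, h⟩ y v = 0 := by
      have hkron : (kron n (Bmod ψ i ⟨(i : ℕ) + 1, h⟩)).mulVec
          (Feps i ⟨(i : ℕ) + 1, h⟩ y) = 0 := by
        funext w
        have hw := hS i h w
        rw [Scontr_Tall ψ i h y w] at hw
        have hd : (Tmat ψ).det ^ ((i : ℕ) + 1) ≠ 0 := pow_ne_zero _ hdet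
        have := (mul_eq_zero.mp hw).resolve_left hd
        simpa using this
      have := kron_inj (Bmod ψ i ⟨(i : ℕ) + 1, h⟩) (hBdet i h) hkron
      exact fun v => congrFun this v
    exact (feps_zero_iff i ⟨(i : ℕ) + 1, h⟩ (adj_ne i h) y).mp hfeps b
  · intro hsym i h w
    rw [Scontr_Tall ψ i h y w]
    rw [show Feps i (⟨(i : ℕ) + 1, h⟩ : Fin n) y = 0 from funext fun v =>
      (feps_zero_iff i ⟨(i : ℕ) + 1, h⟩ (adj_ne i h) y).mpr (hsym i h) v]
    rw [Matrix.mulVec_zero]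
    simp

end GSE

/-- If `det T_ψ ≠ 0`, the kernel of `H_n(ψ)` is the image of the symmetric subspace under the
invertible linear map `T^{all}_ψ`; in particular it has dimension `n+1`. -/
theorem ground_space_entangled_case (ψ : Fin 2 × Fin 2 → ℂ)
    (hψ : ∑ a, Complex.normSq (ψ a) = 1) (hdet : (Tmat ψ).det ≠ 0)
    (n : ℕ) (hn : 2 ≤ n) :
    Function.Bijective (Tall n ψ).mulVecLin ∧
    LinearMap.ker (Hn n ψ).mulVecLin = (SymSubspace n).map (Tall n ψ).mulVecLin ∧
    Module.finrank ℂ (LinearMap.ker (Hn n ψ).mulVecLin) = n + 1 := by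
  have bij : Function.Bijective (Tall n ψ).mulVecLin := by
    exact GSE.kron_bijective (fun k : Fin n => Tmat ψ ^ (k : ℕ))
      (fun k => by rw [Matrix.det_pow]; exact pow_ne_zero _ hdet)
  have hker : LinearMap.ker (Hn n ψ).mulVecLin = (SymSubspace n).map (Tall n ψ).mulVecLin := by
    ext x
    simp only [LinearMap.mem_ker, Submodule.mem_map, Matrix.mulVecLin_apply]
    constructor
    · intro hx
      obtain ⟨y, hy⟩ := bij.surjective x
      rw [Matrix.mulVecLin_apply] at hy
      refine ⟨y, ?_, hy⟩
      exact (GSE.tall_ker_iff ψ hdet y).mp (by rw [hy]; exact hx)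
    · rintro ⟨y, hsym, rfl⟩
      exact (GSE.tall_ker_iff ψ hdet y).mpr hsym
  refine ⟨bij, hker, ?_⟩
  rw [hker]
  rw [← LinearEquiv.finrank_eq
    (Submodule.equivMapOfInjective (Tall n ψ).mulVecLin bij.injective (SymSubspace n))]
  exact GSE.finrank_sym n
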